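/- Let α > −1 be a real number and n ∈ ℕ. For all x, y ∈ ℝ, the Laguerre reproducing kernel satisfies the Christoffel–Darboux formula (x − y)·K_n^α(x,y) = ((n+1)!/Γ(α+n+1)) · (L_n^α(x)·L_{n+1}^α(y) − L_{n+1}^α(x)·L_n^α(y)). -/

import Mathlib

open Polynomial Finset MeasureTheory Real

/-- The generalized Laguerre polynomial
`L_n^α(x) = Σ_{k=0}^n (−1)^k ((α+k+1)_{n−k} / ((n−k)!·k!)) x^k`. -/
noncomputable def laguerre (α : ℝ) (n : ℕ) : Polynomial ℝ :=
  ∑ k ∈ Finset.range (n + 1),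
    Polynomial.C ((-1 : ℝ) ^ k * (ascPochhammer ℝ (n - k)).eval (α + k + 1) /
      ((n - k).factorial * k.factorial)) * Polynomial.X ^ k


/-- The `n`-th Laguerre reproducing kernel
`K_n^α(x,y) = Σ_{k=0}^n (k!/Γ(α+k+1)) L_k^α(x) L_k^α(y)`. -/
noncomputable def laguerreKernel (α : ℝ) (n : ℕ) (x y : ℝ) : ℝ :=
  ∑ k ∈ Finset.range (n + 1),
    (k.factorial : ℝ) / Real.Gamma (α + k + 1) * (laguerre α k).eval x * (laguerre α k).eval y

/-- Coefficient of the Laguerre polynomial. -/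
noncomputable def lagC (α : ℝ) (n k : ℕ) : ℝ :=
  (-1 : ℝ) ^ k * (ascPochhammer ℝ (n - k)).eval (α + k + 1) /
      ((n - k).factorial * k.factorial)

lemma eval_laguerre (α : ℝ) (n : ℕ) (x : ℝ) :
    (laguerre α n).eval x = ∑ k ∈ Finset.range (n+1), lagC α n k * x^k := by
  simp [laguerre, lagC, Polynomial.eval_finset_sum]

lemma ascPochhammer_eval_left (m : ℕ) (t : ℝ) :
    (ascPochhammer ℝ (m+1)).eval t = t * (ascPochhammer ℝ m).eval (t+1) := by
  rw [ascPochhammer_succ_left]; simp [eval_comp]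

lemma key0 (α : ℝ) (m : ℕ) :
    ((m:ℝ)+2) * lagC α (m+2) 0 = (2*m+3+α) * lagC α (m+1) 0 - (m+1+α) * lagC α m 0 := by
  simp only [lagC, Nat.sub_zero, Nat.factorial_zero, pow_zero, one_mul]
  rw [show m+2 = (m+1)+1 from rfl, ascPochhammer_succ_eval, ascPochhammer_succ_eval,
    Nat.factorial_succ (m+1), Nat.factorial_succ m]
  have h1 : ((m+1).factorial : ℝ) ≠ 0 := by positivity
  have h2 : ((m).factorial : ℝ) ≠ 0 := by positivity
  field_simp
  push_cast
  ring

lemma keyS (α : ℝ) (j m : ℕ) :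
    ((j:ℝ)+m+3) * lagC α (j+m+3) (j+1)
      = (2*(j+1+m)+3+α) * lagC α (j+m+2) (j+1) - lagC α (j+m+2) j
        - ((j:ℝ)+1+m+1+α) * lagC α (j+m+1) (j+1) := by
  simp only [lagC, show j+m+3-(j+1) = m+2 by omega, show j+m+2-(j+1) = m+1 by omega,
    show j+m+2-j = m+2 by omega, show j+m+1-(j+1) = m by omega]
  rw [show m+2 = (m+1)+1 from rfl, ascPochhammer_succ_eval (m+1), ascPochhammer_succ_eval m,
    ascPochhammer_eval_left (m+1) (α + j + 1), ascPochhammer_succ_eval m]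
  have e1 : (α + (j:ℝ) + 1) + 1 = α + (j+1:ℕ) + 1 := by push_cast; ring
  rw [e1]
  have h1 : ((m+1).factorial : ℝ) ≠ 0 := by positivity
  have h2 : ((m).factorial : ℝ) ≠ 0 := by positivity
  have h3 : ((j+1).factorial : ℝ) ≠ 0 := by positivity
  have h4 : ((j).factorial : ℝ) ≠ 0 := by positivity
  rw [Nat.factorial_succ (m+1), Nat.factorial_succ m, Nat.factorial_succ j]
  field_simp
  push_cast
  ring

lemma keyT (α : ℝ) (n : ℕ) :
    ((n:ℝ)+2) * lagC α (n+2) (n+1)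
      = (2*n+3+α) * lagC α (n+1) (n+1) - lagC α (n+1) n := by
  simp only [lagC, show n+2-(n+1) = 1 by omega, show n+1-(n+1) = 0 by omega,
    show n+1-n = 1 by omega, Nat.factorial_one, Nat.factorial_zero]
  simp only [ascPochhammer_one, eval_X, ascPochhammer_zero, eval_one]
  have h3 : ((n+1).factorial : ℝ) ≠ 0 := by positivity
  have h4 : ((n).factorial : ℝ) ≠ 0 := by positivity
  rw [Nat.factorial_succ n]
  field_simp
  push_cast
  ring

lemma keyU (α : ℝ) (n : ℕ) :
    ((n:ℝ)+2) * lagC α (n+2) (n+2) = - lagC α (n+1) (n+1) := by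
  simp only [lagC, Nat.sub_self, ascPochhammer_zero, eval_one, Nat.factorial_zero]
  rw [Nat.factorial_succ (n+1)]
  have h3 : ((n+1).factorial : ℝ) ≠ 0 := by positivity
  field_simp
  push_cast
  ring

/-- Three-term recurrence for Laguerre polynomials. -/
lemma laguerre_rec (α : ℝ) (n : ℕ) (x : ℝ) :
    ((n:ℝ)+2) * (laguerre α (n+2)).eval x
      = (2*n+3+α-x) * (laguerre α (n+1)).eval x - ((n:ℝ)+1+α) * (laguerre α n).eval x := by
  rw [eval_laguerre, eval_laguerre, eval_laguerre]
  have h1 : ∑ k ∈ Finset.range (n+2), lagC α (n+1) k * x^k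
      = ∑ k ∈ Finset.range (n+3), (if k ≤ n+1 then lagC α (n+1) k else 0) * x^k := by
    rw [Finset.sum_range_succ (n := n+2)]
    rw [if_neg (by omega), zero_mul, add_zero]
    exact (Finset.sum_congr rfl fun k hk => by
      rw [if_pos (by simp at hk; omega)]).symm
  have h2 : x * ∑ k ∈ Finset.range (n+2), lagC α (n+1) k * x^k
      = ∑ k ∈ Finset.range (n+3), (if k = 0 then 0 else lagC α (n+1) (k-1)) * x^k := by
    rw [Finset.mul_sum]
    conv_rhs => rw [Finset.sum_range_succ' _ (n+2)]
    simp only [Nat.add_sub_cancel, Nat.succ_ne_zero, if_false, if_true, zero_mul, add_zero]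
    exact Finset.sum_congr rfl fun k hk => by ring
  have h0 : ∑ k ∈ Finset.range (n+1), lagC α n k * x^k
      = ∑ k ∈ Finset.range (n+3), (if k ≤ n then lagC α n k else 0) * x^k := by
    rw [Finset.sum_range_succ (n := n+2), Finset.sum_range_succ (n := n+1)]
    rw [if_neg (by omega), if_neg (by omega), zero_mul, zero_mul, add_zero, add_zero]
    exact (Finset.sum_congr rfl fun k hk => by
      rw [if_pos (by simp at hk; omega)]).symm
  rw [sub_mul, h2, h1, h0, Finset.mul_sum, Finset.mul_sum, Finset.mul_sum,
    ← Finset.sum_sub_distrib, ← Finset.sum_sub_distrib]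
  refine Finset.sum_congr rfl fun k hk => ?_
  simp only [Finset.mem_range] at hk
  have : ((n:ℝ)+2) * lagC α (n+2) k
      = (2*n+3+α) * (if k ≤ n+1 then lagC α (n+1) k else 0)
        - (if k = 0 then 0 else lagC α (n+1) (k-1))
        - ((n:ℝ)+1+α) * (if k ≤ n then lagC α n k else 0) := by
    rcases Nat.eq_or_lt_of_le (by omega : k ≤ n + 2) with hk2 | hk2
    · subst hk2
      rw [if_neg (by omega), if_neg (by omega), if_neg (by omega)]
      simpa using keyU α n
    rcases Nat.eq_or_lt_of_le (by omega : k ≤ n + 1) with hk1 | hk1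
    · subst hk1
      rw [if_pos le_rfl, if_neg (by omega), if_neg (by omega)]
      simpa using keyT α n
    have hkn : k ≤ n := by omega
    rw [if_pos (by omega), if_pos hkn]
    rcases k with _ | j
    · rw [if_pos rfl]
      have := key0 α n
      push_cast at this ⊢
      linarith
    · rw [if_neg (by omega)]
      obtain ⟨m, rfl⟩ := Nat.exists_eq_add_of_le hkn
      simp only [Nat.add_sub_cancel, show j+1+m+2 = j+m+3 by omega,
        show j+1+m+1 = j+m+2 by omega, show j+1+m = j+m+1 by omega]
      have := keyS α j m
      push_cast at this ⊢
      linarith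
  linear_combination x ^ k * this

/-- Christoffel–Darboux formula for the Laguerre kernel. -/
theorem laguerre_christoffel_darboux (α : ℝ) (hα : -1 < α) (n : ℕ) (x y : ℝ) :
    (x - y) * laguerreKernel α n x y
      = ((n + 1).factorial : ℝ) / Real.Gamma (α + n + 1) *
          ((laguerre α n).eval x * (laguerre α (n + 1)).eval y
            - (laguerre α (n + 1)).eval x * (laguerre α n).eval y) := by
  induction n with
  | zero =>
      simp only [laguerreKernel, Finset.sum_range_succ, Finset.sum_range_zero, zero_add,
        eval_laguerre, lagC]
      norm_num [ascPochhammer_zero, ascPochhammer_one]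
      ring
  | succ n IH =>
      have hn0 : (0:ℝ) ≤ (n:ℝ) := Nat.cast_nonneg n
      have hpos : (0:ℝ) < α + n + 1 := by linarith
      have h1 : Real.Gamma (α + n + 1) ≠ 0 := ne_of_gt (Real.Gamma_pos_of_pos hpos)
      have h2 : Real.Gamma (α + (↑n + 1) + 1) = (α + ↑n + 1) * Real.Gamma (α + ↑n + 1) := by
        rw [show α + ((n:ℝ)+1) + 1 = (α + ↑n + 1) + 1 by ring,
          Real.Gamma_add_one (ne_of_gt hpos)]
      have h2' : Real.Gamma (α + (↑n + 1) + 1) ≠ 0 := by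
        rw [h2]; exact mul_ne_zero (ne_of_gt hpos) h1
      have hNe : ((n:ℝ)+2) ≠ 0 := by positivity
      have hx2 : (laguerre α (n+2)).eval x
          = ((2*n+3+α-x) * (laguerre α (n+1)).eval x
              - ((n:ℝ)+1+α) * (laguerre α n).eval x) / ((n:ℝ)+2) := by
        field_simp
        linarith [laguerre_rec α n x]
      have hy2 : (laguerre α (n+2)).eval y
          = ((2*n+3+α-y) * (laguerre α (n+1)).eval y
              - ((n:ℝ)+1+α) * (laguerre α n).eval y) / ((n:ℝ)+2) := by
        field_simp
        linarith [laguerre_rec α n y]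
      rw [laguerreKernel, Finset.sum_range_succ, ← laguerreKernel, mul_add, IH,
        show n+1+1 = n+2 from rfl, hx2, hy2, Nat.factorial_succ (n+1)]
      push_cast
      rw [h2]
      field_simp
      ring
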